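/- Suppose that for some n₀, ε, δ > 0 there is an n₀-vertex graph H₀ with at most δ·n₀³ triangles such that at least ε·n₀² edges must be deleted from H₀ to make it triangle-free. Then there exists a tripartite graph H on n = 3n₀ vertices with at most (2/9)·δ·n³ triangles such that at least (1/9)·ε·n² edges must be deleted from H to make it triangle-free. -/

import Mathlib

open Finset SimpleGraph
open scoped Classical

section Aux
variable {V₀ : Type} [Fintype V₀] [DecidableEq V₀]

def tensorK3 (H₀ : SimpleGraph V₀) : SimpleGraph (V₀ × Fin 3) where
  Adj p q := H₀.Adj p.1 q.1 ∧ p.2 ≠ q.2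
  symm := ⟨fun p q h => ⟨h.1.symm, h.2.symm⟩⟩
  loopless := ⟨fun p h => H₀.loopless.irrefl p.1 h.1⟩

lemma tensorK3_adj (H₀ : SimpleGraph V₀) (p q : V₀ × Fin 3) :
    (tensorK3 H₀).Adj p q ↔ H₀.Adj p.1 q.1 ∧ p.2 ≠ q.2 := Iff.rfl

lemma fst_injOn_clique (H₀ : SimpleGraph V₀) {T : Finset (V₀ × Fin 3)}
    (hT : (tensorK3 H₀).IsNClique 3 T) :
    Set.InjOn Prod.fst (T : Set (V₀ × Fin 3)) := by
  intro p hp q hq h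
  by_contra hne
  have := hT.1 hp hq hne
  rw [tensorK3_adj, h] at this
  exact H₀.loopless.irrefl _ this.1

lemma colorOf_spec (H₀ : SimpleGraph V₀) {T : Finset (V₀ × Fin 3)}
    (hT : (tensorK3 H₀).IsNClique 3 T) {x : V₀} (hx : x ∈ T.image Prod.fst) :
    ∃! i : Fin 3, (x, i) ∈ T := by
  obtain ⟨p, hp, rfl⟩ := Finset.mem_image.mp hx
  refine ⟨p.2, hp, fun i hi => ?_⟩
  exact congrArg Prod.snd (fst_injOn_clique H₀ hT hi hp rfl)

lemma tri_count (H₀ : SimpleGraph V₀) [DecidableRel H₀.Adj] :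
    ((tensorK3 H₀).cliqueFinset 3).card ≤ 6 * (H₀.cliqueFinset 3).card := by
  set f : Finset (V₀ × Fin 3) → Finset V₀ := fun T => T.image Prod.fst with hf
  have himg : ((tensorK3 H₀).cliqueFinset 3).image f ⊆ H₀.cliqueFinset 3 := by
    intro t ht
    obtain ⟨T, hT, rfl⟩ := Finset.mem_image.mp ht
    rw [mem_cliqueFinset_iff] at hT ⊢
    constructor
    · intro a ha b hb hab
      simp only [hf, Finset.coe_image, Set.mem_image, Finset.mem_coe] at ha hb
      obtain ⟨p, hp, rfl⟩ := ha
      obtain ⟨q, hq, rfl⟩ := hb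
      exact (hT.1 hp hq (fun h => hab (congrArg Prod.fst h))).1
    · rw [hf, Finset.card_image_of_injOn (fst_injOn_clique H₀ hT)]
      exact hT.2
  calc ((tensorK3 H₀).cliqueFinset 3).card
      ≤ 6 * (((tensorK3 H₀).cliqueFinset 3).image f).card := by
        apply Finset.card_le_mul_card_image
        intro t ht
        obtain ⟨T₀, hT₀, rfl⟩ := Finset.mem_image.mp ht
        have hT₀' := mem_cliqueFinset_iff.mp hT₀
        have htc : (f T₀).card = 3 := by
          rw [hf, Finset.card_image_of_injOn (fst_injOn_clique H₀ hT₀')]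
          exact hT₀'.2
        obtain ⟨a, b, c, hab, hac, hbc, habc⟩ := Finset.card_eq_three.mp htc
        set target : Finset (Fin 3 × Fin 3 × Fin 3) :=
          Finset.univ.filter (fun p => p.1 ≠ p.2.1 ∧ p.1 ≠ p.2.2 ∧ p.2.1 ≠ p.2.2) with htarget
        have htargetcard : target.card = 6 := by rw [htarget]; decide
        set g : Fin 3 × Fin 3 × Fin 3 → Finset (V₀ × Fin 3) :=
          fun p => {(a, p.1), (b, p.2.1), (c, p.2.2)} with hg
        have hsub : ((tensorK3 H₀).cliqueFinset 3).filter (fun x => f x = f T₀)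
            ⊆ target.image g := by
          intro T hT
          rw [Finset.mem_filter, mem_cliqueFinset_iff] at hT
          obtain ⟨hTc, hTf⟩ := hT
          have ha : a ∈ f T := by rw [hTf, habc]; simp
          have hb : b ∈ f T := by rw [hTf, habc]; simp
          have hc : c ∈ f T := by rw [hTf, habc]; simp
          obtain ⟨i, hi, hiu⟩ := colorOf_spec H₀ hTc ha
          obtain ⟨j, hj, hju⟩ := colorOf_spec H₀ hTc hb
          obtain ⟨k, hk, hku⟩ := colorOf_spec H₀ hTc hc
          have hcol : ∀ (x y : V₀ × Fin 3), x ∈ T → y ∈ T → x.1 ≠ y.1 → x.2 ≠ y.2 := by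
            intro x y hx hy hxy
            exact (hTc.1 hx hy (fun h => hxy (congrArg Prod.fst h))).2
          have hTeq : T = {(a, i), (b, j), (c, k)} := by
            apply Finset.eq_of_subset_of_card_le
            · intro p hp
              have hp1 : p.1 ∈ f T := Finset.mem_image_of_mem _ hp
              rw [hTf, habc] at hp1
              simp only [Finset.mem_insert, Finset.mem_singleton] at hp1 ⊢
              rcases hp1 with h1 | h1 | h1
              · left
                have hpT : (p.1, p.2) ∈ T := hp
                rw [h1] at hpT
                exact Prod.ext h1 (hiu _ hpT)
              · right; left
                have hpT : (p.1, p.2) ∈ T := hp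
                rw [h1] at hpT
                exact Prod.ext h1 (hju _ hpT)
              · right; right
                have hpT : (p.1, p.2) ∈ T := hp
                rw [h1] at hpT
                exact Prod.ext h1 (hku _ hpT)
            · rw [hTc.2]
              refine le_trans (Finset.card_insert_le _ _) ?_
              refine Nat.succ_le_succ ?_
              refine le_trans (Finset.card_insert_le _ _) ?_
              simp
          refine Finset.mem_image.mpr ⟨(i, j, k), ?_, ?_⟩
          · rw [htarget]
            simp only [Finset.mem_filter, Finset.mem_univ, true_and]
            exact ⟨hcol _ _ hi hj hab, hcol _ _ hi hk hac, hcol _ _ hj hk hbc⟩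
          · rw [hg]; exact hTeq.symm
        calc (((tensorK3 H₀).cliqueFinset 3).filter (fun x => f x = f T₀)).card
            ≤ (target.image g).card := Finset.card_le_card hsub
          _ ≤ target.card := Finset.card_image_le
          _ = 6 := htargetcard
      _ ≤ 6 * (H₀.cliqueFinset 3).card :=
        Nat.mul_le_mul_left 6 (Finset.card_le_card himg)
end Aux

theorem make_tripartite (n₀ : ℕ) (ε δ : ℝ) {V₀ : Type} [Fintype V₀] [DecidableEq V₀]
    (H₀ : SimpleGraph V₀) [DecidableRel H₀.Adj] (hcard : Fintype.card V₀ = n₀)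
    (htri : ((H₀.cliqueFinset 3).card : ℝ) ≤ δ * (n₀ : ℝ) ^ 3)
    (hdel : ∀ E : Finset (Sym2 V₀),
      (H₀.deleteEdges ↑E).CliqueFree 3 → ε * (n₀ : ℝ) ^ 2 ≤ E.card) :
    ∃ (H : SimpleGraph (V₀ × Fin 3)) (f : V₀ × Fin 3 → Fin 3),
      (∀ u v, H.Adj u v → f u ≠ f v) ∧
      ((H.cliqueFinset 3).card : ℝ) ≤ 2 / 9 * δ * ((3 * n₀ : ℕ) : ℝ) ^ 3 ∧
      ∀ E : Finset (Sym2 (V₀ × Fin 3)),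
        (H.deleteEdges ↑E).CliqueFree 3 → 1 / 9 * ε * ((3 * n₀ : ℕ) : ℝ) ^ 2 ≤ E.card := by
  refine ⟨tensorK3 H₀, Prod.snd, ?_, ?_, ?_⟩
  · intro u v huv
    exact huv.2
  · have h6 := tri_count H₀
    have : (((tensorK3 H₀).cliqueFinset 3).card : ℝ) ≤ 6 * ((H₀.cliqueFinset 3).card : ℝ) := by
      exact_mod_cast h6
    have h3 : ((3 * n₀ : ℕ) : ℝ) = 3 * (n₀ : ℝ) := by push_cast; ring
    rw [h3]
    nlinarith [this, htri]
  · intro E hE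
    set E₀ : Finset (Sym2 V₀) := E.image (Sym2.map Prod.fst) with hE₀
    have hfree : (H₀.deleteEdges ↑E₀).CliqueFree 3 := by
      intro s hs
      obtain ⟨u, v, w, huv, huw, hvw, rfl⟩ := is3Clique_iff.mp hs
      have hadj : ∀ (x y : V₀) (i j : Fin 3), (H₀.deleteEdges ↑E₀).Adj x y → i ≠ j →
          ((tensorK3 H₀).deleteEdges ↑E).Adj (x, i) (y, j) := by
        intro x y i j hxy hij
        rw [SimpleGraph.deleteEdges_adj] at hxy ⊢
        refine ⟨⟨hxy.1, hij⟩, ?_⟩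
        intro hmem
        apply hxy.2
        rw [hE₀]
        exact Finset.mem_coe.mpr
          (Finset.mem_image.mpr ⟨s((x, i), (y, j)), Finset.mem_coe.mp hmem, rfl⟩)
      exact hE {((u : V₀), (0 : Fin 3)), (v, 1), (w, 2)}
        (is3Clique_triple_iff.mpr
          ⟨hadj u v 0 1 huv (by decide), hadj u w 0 2 huw (by decide),
           hadj v w 1 2 hvw (by decide)⟩)
    have h1 := hdel E₀ hfree
    have h2 : (E₀.card : ℝ) ≤ (E.card : ℝ) := by
      exact_mod_cast Finset.card_image_le
    have h3 : ((3 * n₀ : ℕ) : ℝ) = 3 * (n₀ : ℝ) := by push_cast; ring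
    rw [h3]
    nlinarith [h1, h2]
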